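/- The refined tableau calculus Rf(box, T_{K_m}), obtained from T_{K_m} by replacing the rule (box) with the rule (□): T([r]p,x), T_R(r,x,y) / T(p,y), is sound and constructively complete for the logic K_m: every fully expanded Rf(box,T_{K_m})-tableau for a satisfiable finite set of K_m-formulas has an open branch, and for every open branch B of a fully expanded Rf(box,T_{K_m})-tableau there exists a K_m-model with domain the labels occurring in B in which every tableau formula of B is true (T(φ,t)∈B implies φ holds at t, F(φ,t)∈B implies φ fails at t, T_R(a,t,t')∈B implies (t,t')∈R_a, F_R(a,t,t')∈B implies (t,t')∉R_a). -/

import Mathlib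

set_option autoImplicit false

namespace KmTableau

/-- Formulas of the multi-modal logic `K_m`:
`φ ::= p | ¬φ | φ∨φ | [a]φ`, with propositional variables `p : ℕ`
and relational constants `a : Fin m`. -/
inductive Fm (m : ℕ) : Type
  | var : ℕ → Fm m
  | neg : Fm m → Fm m
  | or : Fm m → Fm m → Fm m
  | box : Fin m → Fm m → Fm m

/-- A `K_m`-model `M = (W, (R_a)_a, V)` with `W` nonempty. -/
structure KModel (m : ℕ) where
  W : Type
  ne : Nonempty W
  R : Fin m → W → W → Prop
  V : ℕ → W → Prop

/-- Satisfaction in a `K_m`-model. -/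
def KModel.sat {m : ℕ} (M : KModel m) : M.W → Fm m → Prop
  | v, .var p => M.V p v
  | v, .neg φ => ¬ M.sat v φ
  | v, .or φ ψ => M.sat v φ ∨ M.sat v ψ
  | v, .box a φ => ∀ w, M.R a v w → M.sat w φ

/-- A set of formulas is satisfiable if some model and world satisfy all its members. -/
def Satisfiable {m : ℕ} (N : Set (Fm m)) : Prop :=
  ∃ (M : KModel m) (v : M.W), ∀ φ ∈ N, M.sat v φ

/-- Labels: terms generated from the initial constant `a₀` and Skolem terms `f(a,φ,t)`. -/
inductive Label (m : ℕ) : Type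
  | a0 : Label m
  | sk : Fin m → Fm m → Label m → Label m

/-- Tableau formulas: `T(φ,t)`, `F(φ,t)`, `T_R(a,t,t')`, `F_R(a,t,t')`. -/
inductive TabFm (m : ℕ) : Type
  | T : Fm m → Label m → TabFm m
  | F : Fm m → Label m → TabFm m
  | TR : Fin m → Label m → Label m → TabFm m
  | FR : Fin m → Label m → Label m → TabFm m

/-- The labels occurring in a tableau formula. -/
def TabFm.labels {m : ℕ} : TabFm m → Set (Label m)
  | .T _ t => {t}
  | .F _ t => {t}
  | .TR _ t t' => {t, t'}
  | .FR _ t t' => {t, t'}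

/-- The labels occurring in a set of tableau formulas (the initial label `a₀`,
introduced at the root, always counts as occurring). -/
def Lab {m : ℕ} (B : Set (TabFm m)) : Set (Label m) :=
  insert Label.a0 {t | ∃ f ∈ B, t ∈ f.labels}

/-- A calculus: `C s ds` holds if, on a branch whose set of formulas is `s`, some rule
of the calculus is applicable with denominator instances `ds` (a closure rule
application has `ds = []`). -/
abbrev Calc (m : ℕ) := Set (TabFm m) → List (Set (TabFm m)) → Prop

/-- The root node `{T(φ,a₀) | φ ∈ N}` of a tableau for input `N`. -/
def initial {m : ℕ} (N : Set (Fm m)) : Set (TabFm m) :=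
  {f | ∃ φ ∈ N, f = TabFm.T φ Label.a0}

/-- A tableau for input `N` in calculus `C`: a finitely branching tree of sets of tableau
formulas (nodes indexed by positions `List ℕ`, children of `p` being `p ++ [i]`), whose
root is `{T(φ,a₀) | φ ∈ N}`, and such that the children of every node are obtained by
applying a rule of `C`: each child adds one denominator instance to the node's set. -/
structure Tableau (m : ℕ) (C : Calc m) (N : Set (Fm m)) where
  node : List ℕ → Option (Set (TabFm m))
  rootEq : node [] = some (initial N)
  tree : ∀ (p : List ℕ) (i : ℕ), node (p ++ [i]) ≠ none → node p ≠ none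
  step : ∀ (p : List ℕ) (s : Set (TabFm m)), node p = some s →
    (∀ i : ℕ, node (p ++ [i]) = none) ∨
    (∃ ds, C s ds ∧ ∀ i : ℕ, node (p ++ [i]) = (ds[i]?).map (fun d => s ∪ d))

/-- A branch of a tableau: a maximal path from the root (represented by its
set of positions, a maximal chain under the prefix order). -/
structure Branch {m : ℕ} {C : Calc m} {N : Set (Fm m)} (Tb : Tableau m C N) where
  pos : Set (List ℕ)
  inTree : ∀ p ∈ pos, Tb.node p ≠ none
  chain : ∀ p ∈ pos, ∀ q ∈ pos, p <+: q ∨ q <+: p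
  downClosed : ∀ p ∈ pos, ∀ q : List ℕ, q <+: p → q ∈ pos
  maximal : ∀ q : List ℕ, Tb.node q ≠ none → (∀ p ∈ pos, p <+: q ∨ q <+: p) → q ∈ pos

/-- The set of tableau formulas occurring on a branch. -/
def Branch.fmls {m : ℕ} {C : Calc m} {N : Set (Fm m)} {Tb : Tableau m C N}
    (Br : Branch Tb) : Set (TabFm m) :=
  {f | ∃ p ∈ Br.pos, ∃ s, Tb.node p = some s ∧ f ∈ s}

/-- A branch is open if no closure rule has been applied (is applicable) on it. -/
def Branch.IsOpen {m : ℕ} {C : Calc m} {N : Set (Fm m)} {Tb : Tableau m C N}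
    (Br : Branch Tb) : Prop := ¬ C Br.fmls []

/-- A tableau is fully expanded if on every open branch every applicable rule has been
applied, i.e. some denominator instance of the rule is already contained in the branch. -/
def Tableau.Expanded {m : ℕ} {C : Calc m} {N : Set (Fm m)} (Tb : Tableau m C N) : Prop :=
  ∀ Br : Branch Tb, Br.IsOpen → ∀ ds, C Br.fmls ds → ∃ d ∈ ds, d ⊆ Br.fmls

/-- The calculus `T_{K_m}`. -/
def TKm (m : ℕ) : Calc m := fun s ds =>
  -- (¬⁺) T(¬p,x) / F(p,x)
  (∃ φ x, TabFm.T (.neg φ) x ∈ s ∧ ds = [{TabFm.F φ x}]) ∨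
  -- (¬⁻) F(¬p,x) / T(p,x)
  (∃ φ x, TabFm.F (.neg φ) x ∈ s ∧ ds = [{TabFm.T φ x}]) ∨
  -- (∨⁺) T(p∨q,x) / T(p,x) | T(q,x)
  (∃ φ ψ x, TabFm.T (.or φ ψ) x ∈ s ∧ ds = [{TabFm.T φ x}, {TabFm.T ψ x}]) ∨
  -- (∨⁻) F(p∨q,x) / F(p,x), F(q,x)
  (∃ φ ψ x, TabFm.F (.or φ ψ) x ∈ s ∧ ds = [{TabFm.F φ x, TabFm.F ψ x}]) ∨
  -- (box) T([r]p,x) / F_R(r,x,y) | T(p,y), for any label y occurring on the branch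
  (∃ a φ x y, TabFm.T (.box a φ) x ∈ s ∧ y ∈ Lab s ∧
    ds = [{TabFm.FR a x y}, {TabFm.T φ y}]) ∨
  -- (dia) F([r]p,x) / T_R(r,x,f(r,p,x)), F(p,f(r,p,x))
  (∃ a φ x, TabFm.F (.box a φ) x ∈ s ∧
    ds = [{TabFm.TR a x (Label.sk a φ x), TabFm.F φ (Label.sk a φ x)}]) ∨
  -- closure rules
  (∃ φ x, TabFm.T φ x ∈ s ∧ TabFm.F φ x ∈ s ∧ ds = []) ∨
  (∃ a x y, TabFm.TR a x y ∈ s ∧ TabFm.FR a x y ∈ s ∧ ds = [])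

/-- A `K_m`-model whose domain is (a set of) labels: the model `I(B)` constructed from a
branch has domain the set of labels occurring in `B`. -/
structure LModel (m : ℕ) where
  R : Fin m → Label m → Label m → Prop
  V : ℕ → Label m → Prop

/-- Satisfaction in a label model relativised to its domain `D`. -/
def LModel.sat {m : ℕ} (M : LModel m) (D : Set (Label m)) : Label m → Fm m → Prop
  | t, .var p => M.V p t
  | t, .neg φ => ¬ M.sat D t φ
  | t, .or φ ψ => M.sat D t φ ∨ M.sat D t ψ
  | t, .box a φ => ∀ t' ∈ D, M.R a t t' → M.sat D t' φ

/-- Every tableau formula of `B` is true in the model `M` with domain `Lab B`: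
`T(φ,t) ∈ B` implies `φ` holds at `t`; `F(φ,t) ∈ B` implies `φ` fails at `t`;
`T_R(a,t,t') ∈ B` implies `(t,t') ∈ R_a`; `F_R(a,t,t') ∈ B` implies `(t,t') ∉ R_a`. -/
def Reflects {m : ℕ} (M : LModel m) (B : Set (TabFm m)) : Prop :=
  (∀ φ t, TabFm.T φ t ∈ B → M.sat (Lab B) t φ) ∧
  (∀ φ t, TabFm.F φ t ∈ B → ¬ M.sat (Lab B) t φ) ∧
  (∀ a t t', TabFm.TR a t t' ∈ B → M.R a t t') ∧
  (∀ a t t', TabFm.FR a t t' ∈ B → ¬ M.R a t t')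

/-- The refined calculus `Rf(box, T_{K_m})`: `T_{K_m}` with the rule (box) replaced by
the rule (□): `T([r]p,x), T_R(r,x,y) / T(p,y)`. -/
def RfKm (m : ℕ) : Calc m := fun s ds =>
  (∃ φ x, TabFm.T (.neg φ) x ∈ s ∧ ds = [{TabFm.F φ x}]) ∨
  (∃ φ x, TabFm.F (.neg φ) x ∈ s ∧ ds = [{TabFm.T φ x}]) ∨
  (∃ φ ψ x, TabFm.T (.or φ ψ) x ∈ s ∧ ds = [{TabFm.T φ x}, {TabFm.T ψ x}]) ∨
  (∃ φ ψ x, TabFm.F (.or φ ψ) x ∈ s ∧ ds = [{TabFm.F φ x, TabFm.F ψ x}]) ∨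
  -- (□) T([r]p,x), T_R(r,x,y) / T(p,y)
  (∃ a φ x y, TabFm.T (.box a φ) x ∈ s ∧ TabFm.TR a x y ∈ s ∧ ds = [{TabFm.T φ y}]) ∨
  (∃ a φ x, TabFm.F (.box a φ) x ∈ s ∧
    ds = [{TabFm.TR a x (Label.sk a φ x), TabFm.F φ (Label.sk a φ x)}]) ∨
  (∃ φ x, TabFm.T φ x ∈ s ∧ TabFm.F φ x ∈ s ∧ ds = []) ∨
  (∃ a x y, TabFm.TR a x y ∈ s ∧ TabFm.FR a x y ∈ s ∧ ds = [])


section Aux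
variable {m : ℕ}

theorem sk_ne (a : Fin m) (φ : Fm m) : ∀ x : Label m, Label.sk a φ x ≠ x := by
  intro x
  induction x with
  | a0 => exact fun h => by cases h
  | sk b ψ y ih =>
    intro h
    injection h with h1 h2 h3
    subst h1; subst h2
    exact ih h3

/-- Truth of a tableau formula under an interpretation of labels. -/
def Holds (M : KModel m) (ι : Label m → M.W) : TabFm m → Prop
  | .T φ t => M.sat (ι t) φ
  | .F φ t => ¬ M.sat (ι t) φ
  | .TR a t t' => M.R a (ι t) (ι t')
  | .FR a t t' => ¬ M.R a (ι t) (ι t')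

def Realizes (M : KModel m) (ι : Label m → M.W) (s : Set (TabFm m)) : Prop :=
  ∀ f ∈ s, Holds M ι f

def SkOk (s : Set (TabFm m)) : Prop :=
  ∀ a φ x, (∃ f ∈ s, Label.sk a φ x ∈ f.labels) →
    TabFm.TR a x (Label.sk a φ x) ∈ s ∧ TabFm.F φ (Label.sk a φ x) ∈ s

def Good (s : Set (TabFm m)) : Prop :=
  (∃ (M : KModel m) (ι : Label m → M.W), Realizes M ι s) ∧ SkOk s

theorem Realizes.union {M : KModel m} {ι : Label m → M.W} {s d : Set (TabFm m)}
    (h1 : Realizes M ι s) (h2 : Realizes M ι d) : Realizes M ι (s ∪ d) := by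
  intro f hf
  rcases hf with hf | hf
  · exact h1 f hf
  · exact h2 f hf

theorem holds_congr {M : KModel m} {ι ι' : Label m → M.W} {f : TabFm m}
    (h : ∀ t ∈ f.labels, ι t = ι' t) : Holds M ι f ↔ Holds M ι' f := by
  cases f with
  | T φ t => simp only [Holds, h t (by simp [TabFm.labels])]
  | F φ t => simp only [Holds, h t (by simp [TabFm.labels])]
  | TR a t t' =>
    simp only [Holds, h t (by simp [TabFm.labels]), h t' (by simp [TabFm.labels])]
  | FR a t t' =>
    simp only [Holds, h t (by simp [TabFm.labels]), h t' (by simp [TabFm.labels])]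

theorem skok_union {s d : Set (TabFm m)} (hs : SkOk s)
    (hd : ∀ f ∈ d, ∀ t ∈ f.labels, ∃ g ∈ s, t ∈ g.labels) : SkOk (s ∪ d) := by
  rintro a φ x ⟨f, hf, hlf⟩
  have hocc : ∃ g ∈ s, Label.sk a φ x ∈ g.labels := by
    rcases hf with hf | hf
    · exact ⟨f, hf, hlf⟩
    · exact hd f hf _ hlf
  obtain ⟨h1, h2⟩ := hs a φ x hocc
  exact ⟨Set.mem_union_left _ h1, Set.mem_union_left _ h2⟩

theorem good_step {s : Set (TabFm m)} {ds : List (Set (TabFm m))}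
    (hG : Good s) (hC : RfKm m s ds) : ∃ d ∈ ds, Good (s ∪ d) := by
  classical
  obtain ⟨⟨M, ι, hR⟩, hSk⟩ := hG
  rcases hC with ⟨φ,x,hp,rfl⟩ | ⟨φ,x,hp,rfl⟩ | ⟨φ,ψ,x,hp,rfl⟩ | ⟨φ,ψ,x,hp,rfl⟩ |
    ⟨a,φ,x,y,hp,hq,rfl⟩ | ⟨a,φ,x,hp,rfl⟩ | ⟨φ,x,hp,hq,rfl⟩ | ⟨a,x,y,hp,hq,rfl⟩
  · -- neg+
    refine ⟨_, List.mem_singleton_self _, ⟨M, ι, hR.union ?_⟩, skok_union hSk ?_⟩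
    · rintro f rfl
      have := hR _ hp
      simp only [Holds, KModel.sat] at this ⊢
      exact this
    · rintro f rfl t ht
      exact ⟨_, hp, by simpa [TabFm.labels] using ht⟩
  · -- neg-
    refine ⟨_, List.mem_singleton_self _, ⟨M, ι, hR.union ?_⟩, skok_union hSk ?_⟩
    · rintro f rfl
      have := hR _ hp
      simp only [Holds, KModel.sat, not_not] at this ⊢
      exact this
    · rintro f rfl t ht
      exact ⟨_, hp, by simpa [TabFm.labels] using ht⟩
  · -- or+
    have := hR _ hp
    simp only [Holds, KModel.sat] at this
    rcases this with h | h
    · refine ⟨_, List.mem_cons_self, ⟨M, ι, hR.union ?_⟩, skok_union hSk ?_⟩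
      · rintro f rfl
        simp only [Holds]
        exact h
      · rintro f rfl t ht
        exact ⟨_, hp, by simpa [TabFm.labels] using ht⟩
    · refine ⟨_, List.mem_cons_of_mem _ (List.mem_singleton_self _),
        ⟨M, ι, hR.union ?_⟩, skok_union hSk ?_⟩
      · rintro f rfl
        simp only [Holds]
        exact h
      · rintro f rfl t ht
        exact ⟨_, hp, by simpa [TabFm.labels] using ht⟩
  · -- or-
    have := hR _ hp
    simp only [Holds, KModel.sat, not_or] at this
    refine ⟨_, List.mem_singleton_self _, ⟨M, ι, hR.union ?_⟩, skok_union hSk ?_⟩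
    · rintro f (rfl | rfl)
      · simp only [Holds]; exact this.1
      · simp only [Holds]; exact this.2
    · rintro f (rfl | rfl) t ht <;> exact ⟨_, hp, by simpa [TabFm.labels] using ht⟩
  · -- box (refined)
    have h1 := hR _ hp
    have h2 := hR _ hq
    simp only [Holds, KModel.sat] at h1 h2
    refine ⟨_, List.mem_singleton_self _, ⟨M, ι, hR.union ?_⟩, skok_union hSk ?_⟩
    · rintro f rfl
      simp only [Holds]
      exact h1 _ h2
    · rintro f rfl t ht
      exact ⟨_, hq, by simp [TabFm.labels]; right; simpa [TabFm.labels] using ht⟩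
  · -- dia
    by_cases hocc : ∃ f ∈ s, Label.sk a φ x ∈ f.labels
    · obtain ⟨h1, h2⟩ := hSk a φ x hocc
      refine ⟨_, List.mem_singleton_self _, ?_⟩
      have hsub : ({TabFm.TR a x (Label.sk a φ x), TabFm.F φ (Label.sk a φ x)} :
          Set (TabFm m)) ⊆ s := by
        rintro f (rfl | rfl) <;> assumption
      rw [Set.union_eq_self_of_subset_right hsub]
      exact ⟨⟨M, ι, hR⟩, hSk⟩
    · have hx := hR _ hp
      simp only [Holds, KModel.sat] at hx
      push_neg at hx
      obtain ⟨w, hw, hnw⟩ := hx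
      set sk := Label.sk a φ x with hskdef
      let ι' := Function.update ι sk w
      have hι'ne : ∀ t : Label m, t ≠ sk → ι' t = ι t :=
        fun t ht => Function.update_of_ne ht _ _
      have hι'sk : ι' sk = w := Function.update_self _ _ _
      refine ⟨_, List.mem_singleton_self _, ⟨M, ι', ?_⟩, ?_⟩
      · apply Realizes.union
        · intro f hf
          have hc : ∀ t ∈ f.labels, ι t = ι' t := by
            intro t ht
            have : t ≠ sk := fun he => hocc ⟨f, hf, he ▸ ht⟩
            exact (hι'ne t this).symm
          exact (holds_congr hc).mp (hR f hf)
        · have hxsk : x ≠ sk := fun he => sk_ne a φ x (by rw [← hskdef]; exact he.symm)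
          rintro f (rfl | rfl)
          · simp only [Holds]
            rw [hι'ne x hxsk, hι'sk]
            exact hw
          · simp only [Holds]
            rw [hι'sk]
            exact hnw
      · rintro a' φ' x' ⟨f, hf, hlf⟩
        rcases hf with hf | hf
        · obtain ⟨g1, g2⟩ := hSk a' φ' x' ⟨f, hf, hlf⟩
          exact ⟨Set.mem_union_left _ g1, Set.mem_union_left _ g2⟩
        · rcases hf with rfl | rfl
          · simp only [TabFm.labels, Set.mem_insert_iff, Set.mem_singleton_iff] at hlf
            rcases hlf with h | h
            · obtain ⟨g1, g2⟩ := hSk a' φ' x' ⟨_, hp, by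
                simp [TabFm.labels, h]⟩
              exact ⟨Set.mem_union_left _ g1, Set.mem_union_left _ g2⟩
            · rw [hskdef] at h
              injection h with e1 e2 e3
              subst e1; subst e2; subst e3
              exact ⟨Set.mem_union_right _ (Set.mem_insert _ _),
                Set.mem_union_right _ (Set.mem_insert_of_mem _ rfl)⟩
          · simp only [TabFm.labels, Set.mem_singleton_iff] at hlf
            rw [hskdef] at hlf
            injection hlf with e1 e2 e3
            subst e1; subst e2; subst e3
            exact ⟨Set.mem_union_right _ (Set.mem_insert _ _),
              Set.mem_union_right _ (Set.mem_insert_of_mem _ rfl)⟩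
  · -- closure T/F
    have h1 := hR _ hp
    have h2 := hR _ hq
    simp only [Holds] at h1 h2
    exact absurd h1 h2
  · -- closure TR/FR
    have h1 := hR _ hp
    have h2 := hR _ hq
    simp only [Holds] at h1 h2
    exact absurd h1 h2

variable {C : Calc m} {N : Set (Fm m)}

theorem node_ne_none_prefix (Tb : Tableau m C N) :
    ∀ (r p : List ℕ), Tb.node (p ++ r) ≠ none → Tb.node p ≠ none := by
  intro r
  induction r using List.reverseRecOn with
  | nil => intro p h; simpa using h
  | append_singleton r i ih =>
    intro p h
    rw [← List.append_assoc] at h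
    exact ih p (Tb.tree (p ++ r) i h)

theorem node_subset (Tb : Tableau m C N) :
    ∀ (r p : List ℕ) (s s' : Set (TabFm m)),
      Tb.node p = some s → Tb.node (p ++ r) = some s' → s ⊆ s' := by
  intro r
  induction r using List.reverseRecOn with
  | nil =>
    intro p s s' h h'
    rw [List.append_nil, h] at h'
    cases h'
    exact subset_rfl
  | append_singleton r i ih =>
    intro p s s' h h'
    rw [← List.append_assoc] at h'
    have hne : Tb.node (p ++ r) ≠ none := Tb.tree _ i (by rw [h']; exact Option.some_ne_none _)
    obtain ⟨sm, hm⟩ := Option.ne_none_iff_exists'.mp hne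
    rcases Tb.step _ _ hm with hleaf | ⟨ds, _, hch⟩
    · rw [hleaf i] at h'
      cases h'
    · have hthis := hch i
      rw [h'] at hthis
      rcases hd : ds[i]? with _ | d
      · rw [hd] at hthis
        simp at hthis
      · rw [hd] at hthis
        simp only [Option.map_some] at hthis
        have hs' : s' = sm ∪ d := by
          injection hthis
        exact (ih p s sm h hm).trans (hs' ▸ Set.subset_union_left)

theorem good_initial {N : Set (Fm m)} (hsat : Satisfiable N) : Good (initial N) := by
  obtain ⟨M, v, hv⟩ := hsat
  constructor
  · refine ⟨M, fun _ => v, ?_⟩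
    rintro f ⟨φ, hφ, rfl⟩
    simp only [Holds]
    exact hv φ hφ
  · rintro a φ x ⟨f, ⟨ψ, hψ, rfl⟩, hl⟩
    simp only [TabFm.labels, Set.mem_singleton_iff] at hl
    exact absurd hl (fun h => by cases h)

theorem exists_open_branch {N : Set (Fm m)} (Tb : Tableau m (RfKm m) N)
    (h0 : Good (initial N)) : ∃ Br : Branch Tb, Br.IsOpen := by
  classical
  let Q : List ℕ → Prop := fun p => ∃ s, Tb.node p = some s ∧ Good s
  have hQ0 : Q [] := ⟨_, Tb.rootEq, h0⟩
  have hQstep : ∀ p, Q p → (∀ i, Tb.node (p ++ [i]) = none) ∨ ∃ i, Q (p ++ [i]) := by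
    rintro p ⟨s, hp, hg⟩
    rcases Tb.step p s hp with h | ⟨ds, hC, hch⟩
    · exact Or.inl h
    · obtain ⟨d, hd, hgd⟩ := good_step hg hC
      obtain ⟨i, hi, hieq⟩ := List.getElem_of_mem hd
      refine Or.inr ⟨i, s ∪ d, ?_, hgd⟩
      rw [hch i, List.getElem?_eq_getElem hi, hieq]
      rfl
  let next : {p // Q p} → {p // Q p} := fun x =>
    if h : ∃ i, Q (x.1 ++ [i]) then ⟨x.1 ++ [h.choose], h.choose_spec⟩ else x
  let f : ℕ → {p // Q p} := fun n => next^[n] ⟨[], hQ0⟩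
  have hf0 : (f 0).1 = [] := rfl
  have hfsucc : ∀ n, f (n+1) = next (f n) := fun n => Function.iterate_succ_apply' next n _
  have hmono1 : ∀ n, (f n).1 <+: (f (n+1)).1 := by
    intro n
    rw [hfsucc]
    by_cases h : ∃ i, Q ((f n).1 ++ [i])
    · simp only [next, dif_pos h]
      exact ⟨[h.choose], rfl⟩
    · simp only [next, dif_neg h]
      exact List.prefix_refl _
  have hmono : ∀ n k, n ≤ k → (f n).1 <+: (f k).1 := by
    intro n k h
    induction h with
    | refl => exact List.prefix_refl _
    | step _ ih => exact ih.trans (hmono1 _)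
  have hnode : ∀ n, ∃ s, Tb.node (f n).1 = some s ∧ Good s := fun n => (f n).2
  have hstuck_leaf : ∀ n, (¬ ∃ i, Q ((f n).1 ++ [i])) →
      ∀ i, Tb.node ((f n).1 ++ [i]) = none := by
    intro n h
    rcases hQstep (f n).1 (f n).2 with h' | h'
    · exact h'
    · exact absurd h' h
  have hlen : (∀ k, ∃ i, Q ((f k).1 ++ [i])) → ∀ n, (f n).1.length = n := by
    intro hall n
    induction n with
    | zero => rw [hf0]; rfl
    | succ n ih =>
      rw [hfsucc]
      simp only [next, dif_pos (hall n)]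
      simp [ih]
  refine ⟨⟨{p | ∃ n, p <+: (f n).1}, ?_, ?_, ?_, ?_⟩, ?_⟩
  · -- inTree
    rintro p ⟨n, t, ht⟩
    obtain ⟨s, hs, -⟩ := hnode n
    refine node_ne_none_prefix Tb t p ?_
    rw [ht, hs]
    exact Option.some_ne_none _
  · -- chain
    rintro p ⟨n, hp⟩ q ⟨k, hq⟩
    rcases le_total n k with h | h
    · exact List.prefix_or_prefix_of_prefix (hp.trans (hmono n k h)) hq
    · exact (List.prefix_or_prefix_of_prefix (hq.trans (hmono k n h)) hp).symm
  · -- downClosed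
    rintro p ⟨n, hp⟩ q hq
    exact ⟨n, hq.trans hp⟩
  · -- maximal
    intro q hq hcomp
    by_contra hno
    simp only [Set.mem_setOf_eq, not_exists] at hno
    have hall : ∀ n, (f n).1 <+: q := by
      intro n
      rcases hcomp (f n).1 ⟨n, List.prefix_refl _⟩ with h | h
      · exact h
      · exact absurd h (hno n)
    by_cases hprog : ∀ k, ∃ i, Q ((f k).1 ++ [i])
    · have h1 := (hall (q.length + 1)).length_le
      rw [hlen hprog] at h1
      omega
    · push_neg at hprog
      obtain ⟨n, hn⟩ := hprog
      obtain ⟨t, ht⟩ := hall n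
      cases t with
      | nil =>
        rw [List.append_nil] at ht
        exact hno n (ht ▸ List.prefix_refl _)
      | cons i r =>
        have hleaf := hstuck_leaf n (not_exists.mpr hn) i
        apply hq
        have : q = ((f n).1 ++ [i]) ++ r := by
          rw [← ht, List.append_assoc]
          rfl
        rw [this]
        by_contra hne
        exact (node_ne_none_prefix Tb r _ hne) hleaf
  · -- open
    intro hC
    have hfml : ∀ g : TabFm m,
        (∃ p ∈ {p : List ℕ | ∃ n, p <+: (f n).1}, ∃ s, Tb.node p = some s ∧ g ∈ s) →
        ∃ n s, Tb.node (f n).1 = some s ∧ Good s ∧ g ∈ s := by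
      rintro g ⟨p, ⟨n, t, ht⟩, sp, hsp, hg⟩
      obtain ⟨sn, hsn, hgood⟩ := hnode n
      refine ⟨n, sn, hsn, hgood, ?_⟩
      exact node_subset Tb t p sp sn hsp (ht ▸ hsn) hg
    have hpair : ∀ g1 g2 : TabFm m,
        (∃ p ∈ {p : List ℕ | ∃ n, p <+: (f n).1}, ∃ s, Tb.node p = some s ∧ g1 ∈ s) →
        (∃ p ∈ {p : List ℕ | ∃ n, p <+: (f n).1}, ∃ s, Tb.node p = some s ∧ g2 ∈ s) →
        ∃ s, Good s ∧ g1 ∈ s ∧ g2 ∈ s := by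
      intro g1 g2 h1 h2
      obtain ⟨n1, s1, hn1, hg1, hm1⟩ := hfml g1 h1
      obtain ⟨n2, s2, hn2, hg2, hm2⟩ := hfml g2 h2
      rcases le_total n1 n2 with h | h
      · obtain ⟨t, ht⟩ := hmono n1 n2 h
        exact ⟨s2, hg2, node_subset Tb t _ s1 s2 hn1 (ht ▸ hn2) hm1, hm2⟩
      · obtain ⟨t, ht⟩ := hmono n2 n1 h
        exact ⟨s1, hg1, hm1, node_subset Tb t _ s2 s1 hn2 (ht ▸ hn1) hm2⟩
    rcases hC with ⟨φ,x,hp,he⟩ | ⟨φ,x,hp,he⟩ | ⟨φ,ψ,x,hp,he⟩ | ⟨φ,ψ,x,hp,he⟩ |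
      ⟨a,φ,x,y,hp,hq,he⟩ | ⟨a,φ,x,hp,he⟩ | ⟨φ,x,hp,hq,he⟩ | ⟨a,x,y,hp,hq,he⟩
    · cases he
    · cases he
    · cases he
    · cases he
    · cases he
    · cases he
    · obtain ⟨s, ⟨⟨M, ι, hR⟩, -⟩, hm1, hm2⟩ := hpair _ _ hp hq
      have h1 := hR _ hm1
      have h2 := hR _ hm2
      simp only [Holds] at h1 h2
      exact absurd h1 h2
    · obtain ⟨s, ⟨⟨M, ι, hR⟩, -⟩, hm1, hm2⟩ := hpair _ _ hp hq
      have h1 := hR _ hm1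
      have h2 := hR _ hm2
      simp only [Holds] at h1 h2
      exact absurd h1 h2

theorem branch_model {N : Set (Fm m)} {Tb : Tableau m (RfKm m) N} (hE : Tb.Expanded)
    (Br : Branch Tb) (hO : Br.IsOpen) : ∃ M : LModel m, Reflects M Br.fmls := by
  set B := Br.fmls with hB
  let M : LModel m := ⟨fun a t t' => TabFm.TR a t t' ∈ B, fun p t => TabFm.T (.var p) t ∈ B⟩
  have hexp : ∀ ds, RfKm m B ds → ∃ d ∈ ds, d ⊆ B := fun ds h => hE Br hO ds h
  have hMR : ∀ a t t', M.R a t t' ↔ TabFm.TR a t t' ∈ B := fun _ _ _ => Iff.rfl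
  have key : ∀ (φ : Fm m) (t : Label m),
      (TabFm.T φ t ∈ B → M.sat (Lab B) t φ) ∧ (TabFm.F φ t ∈ B → ¬ M.sat (Lab B) t φ) := by
    intro φ
    induction φ with
    | var p =>
      intro t
      constructor
      · intro h
        simp only [LModel.sat]
        exact h
      · intro h hs
        simp only [LModel.sat] at hs
        exact hO (Or.inr (Or.inr (Or.inr (Or.inr (Or.inr (Or.inr
          (Or.inl ⟨Fm.var p, t, hs, h, rfl⟩)))))))
    | neg φ ih =>
      intro t
      constructor
      · intro h
        obtain ⟨d, hd, hsub⟩ := hexp _ (Or.inl ⟨φ, t, h, rfl⟩)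
        rw [List.mem_singleton] at hd
        subst hd
        have hF : TabFm.F φ t ∈ B := hsub rfl
        simp only [LModel.sat]
        exact (ih t).2 hF
      · intro h hs
        obtain ⟨d, hd, hsub⟩ := hexp _ (Or.inr (Or.inl ⟨φ, t, h, rfl⟩))
        rw [List.mem_singleton] at hd
        subst hd
        have hT : TabFm.T φ t ∈ B := hsub rfl
        simp only [LModel.sat] at hs
        exact hs ((ih t).1 hT)
    | or φ ψ ihφ ihψ =>
      intro t
      constructor
      · intro h
        obtain ⟨d, hd, hsub⟩ := hexp _ (Or.inr (Or.inr (Or.inl ⟨φ, ψ, t, h, rfl⟩)))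
        simp only [List.mem_cons, List.mem_singleton, List.not_mem_nil, or_false] at hd
        simp only [LModel.sat]
        rcases hd with rfl | rfl
        · exact Or.inl ((ihφ t).1 (hsub rfl))
        · exact Or.inr ((ihψ t).1 (hsub rfl))
      · intro h hs
        obtain ⟨d, hd, hsub⟩ := hexp _ (Or.inr (Or.inr (Or.inr (Or.inl ⟨φ, ψ, t, h, rfl⟩))))
        rw [List.mem_singleton] at hd
        subst hd
        have hF1 : TabFm.F φ t ∈ B := hsub (Set.mem_insert _ _)
        have hF2 : TabFm.F ψ t ∈ B := hsub (Set.mem_insert_of_mem _ rfl)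
        simp only [LModel.sat] at hs
        rcases hs with hs | hs
        · exact (ihφ t).2 hF1 hs
        · exact (ihψ t).2 hF2 hs
    | box a φ ih =>
      intro t
      constructor
      · intro h
        simp only [LModel.sat]
        intro t' ht' hr
        have hTR : TabFm.TR a t t' ∈ B := hr
        obtain ⟨d, hd, hsub⟩ := hexp _ (Or.inr (Or.inr (Or.inr (Or.inr
          (Or.inl ⟨a, φ, t, t', h, hTR, rfl⟩)))))
        rw [List.mem_singleton] at hd
        subst hd
        exact (ih t').1 (hsub rfl)
      · intro h hs
        obtain ⟨d, hd, hsub⟩ := hexp _ (Or.inr (Or.inr (Or.inr (Or.inr (Or.inr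
          (Or.inl ⟨a, φ, t, h, rfl⟩))))))
        rw [List.mem_singleton] at hd
        subst hd
        have hTR : TabFm.TR a t (Label.sk a φ t) ∈ B := hsub (Set.mem_insert _ _)
        have hF : TabFm.F φ (Label.sk a φ t) ∈ B := hsub (Set.mem_insert_of_mem _ rfl)
        have hskLab : Label.sk a φ t ∈ Lab B := by
          refine Set.mem_insert_of_mem _ ⟨TabFm.TR a t (Label.sk a φ t), hTR, ?_⟩
          simp [TabFm.labels]
        simp only [LModel.sat] at hs
        exact (ih _).2 hF (hs _ hskLab hTR)
  refine ⟨M, fun φ t h => (key φ t).1 h, fun φ t h => (key φ t).2 h,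
    fun a t t' h => h, fun a t t' h hR => ?_⟩
  exact hO (Or.inr (Or.inr (Or.inr (Or.inr (Or.inr (Or.inr (Or.inr ⟨a, t, t', hR, h, rfl⟩)))))))

end Aux

/-- The refined tableau calculus `Rf(box, T_{K_m})` is sound and
constructively complete for the logic `K_m`: every fully expanded `Rf(box,T_{K_m})`-tableau
for a satisfiable finite set of `K_m`-formulas has an open branch, and for every open
branch `B` of a fully expanded `Rf(box,T_{K_m})`-tableau there exists a `K_m`-model with
domain the labels occurring in `B` in which every tableau formula of `B` is true. -/
theorem RfKm_sound_and_constructively_complete (m : ℕ) :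
    (∀ N : Set (Fm m), N.Finite → Satisfiable N →
      ∀ Tb : Tableau m (RfKm m) N, Tb.Expanded → ∃ Br : Branch Tb, Br.IsOpen) ∧
    (∀ (N : Set (Fm m)) (Tb : Tableau m (RfKm m) N), Tb.Expanded →
      ∀ Br : Branch Tb, Br.IsOpen → ∃ M : LModel m, Reflects M Br.fmls) := by
  constructor
  · intro N _ hsat Tb _
    exact exists_open_branch Tb (good_initial hsat)
  · intro N Tb hE Br hO
    exact branch_model hE Br hO

end KmTableau
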